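/- For all positive integers n and q, every word of length at least ^{n-1}(2q+1) over a q-letter alphabet encounters the n-th Zimin word Z_n; consequently f(n,q) ≤ ^{n-1}(2q+1). -/

import Mathlib

open Filter

/-- `U` is an instance of `V`: image of `V` under a nonerasing substitution. -/
def IsInstance {Γ β : Type*} (V : List Γ) (U : List β) : Prop :=
  ∃ φ : Γ → List β, (∀ x ∈ V, φ x ≠ []) ∧ U = (V.map φ).flatten

/-- `W` encounters `V`: some factor of `W` is an instance of `V`. -/
def Encounters {Γ β : Type*} (V : List Γ) (W : List β) : Prop :=
  ∃ U : List β, U <:+: W ∧ IsInstance V U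

/-- Zimin words over alphabet ℕ. -/
def Zimin : ℕ → List ℕ
  | 0 => []
  | n + 1 => Zimin n ++ [n] ++ Zimin n

/-- Least M such that every q-ary word of length M encounters Z_n. -/
noncomputable def fZ (n q : ℕ) : ℕ :=
  sInf {M | ∀ W : List (Fin q), W.length = M → Encounters (Zimin n) W}

/-- Exponential tower with b copies of a. -/
def tower (a : ℕ) : ℕ → ℕ
  | 0 => 1
  | b + 1 => a ^ tower a b

/-- Number of length-M q-ary words that are instances of V. -/
noncomputable def instCount (V : List ℕ) (q M : ℕ) : ℕ :=
  Nat.card {W : Fin M → Fin q // IsInstance V (List.ofFn W)}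

/-- Factor density d(V,W). -/
noncomputable def factorDensity {α : Type*} [DecidableEq α] (V W : List α) : ℝ :=
  (((((Finset.range (W.length + 1)) ×ˢ (Finset.range (W.length + 1))).filter
      (fun p => p.1 < p.2 ∧ (W.drop p.1).take (p.2 - p.1) = V)).card : ℝ)) /
    ((W.length : ℝ) + 1 - (V.length : ℝ))

/-- Number of substrings of W (given by position pairs) that are V-instances. -/
noncomputable def instSubCount {Γ β : Type*} (V : List Γ) (W : List β) : ℕ :=
  Nat.card {p : ℕ × ℕ //
    p.1 < p.2 ∧ p.2 ≤ W.length ∧ IsInstance V ((W.drop p.1).take (p.2 - p.1))}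

/-- Instance density δ(V,W). -/
noncomputable def instDensity {Γ β : Type*} (V : List Γ) (W : List β) : ℝ :=
  (instSubCount V W : ℝ) / ((W.length + 1).choose 2 : ℝ)

/-- q-liminf density of V. -/
noncomputable def liminfDensity {Γ : Type*} (V : List Γ) (q : ℕ) : ℝ :=
  Filter.liminf (fun W : List (Fin q) => instDensity V W) (Filter.comap List.length Filter.atTop)

/-- Expected instance density of V in a uniformly random q-ary word of length n. -/
noncomputable def expDensity {Γ : Type*} (V : List Γ) (q n : ℕ) : ℝ :=
  (∑ W : Fin n → Fin q, instDensity V (List.ofFn W)) / (q : ℝ) ^ n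

/-- Variance of the instance density of V in a uniformly random q-ary word of length n. -/
noncomputable def varDensity {Γ : Type*} (V : List Γ) (q n : ℕ) : ℝ :=
  (∑ W : Fin n → Fin q, (instDensity V (List.ofFn W) - expDensity V q n) ^ 2) / (q : ℝ) ^ n

/-- Probability that a uniformly random q-ary word of length n is a V-instance. -/
noncomputable def instProb {Γ : Type*} (V : List Γ) (q n : ℕ) : ℝ :=
  (Nat.card {W : Fin n → Fin q // IsInstance V (List.ofFn W)} : ℝ) / (q : ℝ) ^ n

/-- V is doubled: every letter occurring in V occurs at least twice. -/
def Doubled {Γ : Type*} [DecidableEq Γ] (V : List Γ) : Prop :=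
  ∀ x ∈ V, 2 ≤ V.count x

/-- Number of letter recurrences ‖V‖ = |V| - |L(V)|. -/
def recurCount {Γ : Type*} [DecidableEq Γ] (V : List Γ) : ℕ :=
  V.length - V.dedup.length


lemma mem_zimin_lt : ∀ n, ∀ x ∈ Zimin n, x < n := by
  intro n
  induction n with
  | zero => simp [Zimin]
  | succ m ih =>
    intro x hx
    simp only [Zimin, List.mem_append, List.mem_singleton] at hx
    rcases hx with (hx | hx) | hx
    · exact lt_trans (ih x hx) (Nat.lt_succ_self m)
    · omega
    · exact lt_trans (ih x hx) (Nat.lt_succ_self m)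

lemma tower_pos (a : ℕ) (ha : 0 < a) : ∀ b, 0 < tower a b := by
  intro b
  induction b with
  | zero => simp [tower]
  | succ c ih => exact pow_pos ha _

lemma arith_key (q M : ℕ) (hq : 1 ≤ q) (hM : 1 ≤ M) :
    M * (2 * q ^ M + 1) ≤ (2 * q + 1) ^ M := by
  induction M with
  | zero => omega
  | succ m ih =>
    rcases Nat.eq_zero_or_pos m with hm | hm
    · subst hm
      have e1 : q ^ (0+1) = q := pow_one q
      have e2 : (2*q+1) ^ (0+1) = 2*q+1 := pow_one _
      rw [e1, e2]
      omega
    · have h1 := ih hm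
      have h2 : ((m+1) * (2 * q ^ (m+1) + 1)) ≤ (2*q+1) * (m * (2 * q ^ m + 1)) := by
        have ha : 1 ≤ q ^ m := Nat.one_le_pow _ _ hq
        have hqq : q ^ (m+1) = q * q ^ m := by ring
        rw [hqq]
        set a := q ^ m with hadef
        have t1 : 2*q*a ≤ 2*m*q*a := by
          calc 2*q*a = 1*(2*q*a) := by ring
            _ ≤ m*(2*q*a) := Nat.mul_le_mul_right _ hm
            _ = 2*m*q*a := by ring
        have t2 : 1 ≤ 2*m*q := by
          calc 1 = 1*1 := by ring
            _ ≤ m*q := Nat.mul_le_mul hm hq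
            _ ≤ 2*(m*q) := by omega
            _ = 2*m*q := by ring
        nlinarith [t1, t2]
      calc (m+1) * (2 * q ^ (m+1) + 1) ≤ (2*q+1) * (m * (2 * q ^ m + 1)) := h2
        _ ≤ (2*q+1) * (2*q+1)^m := Nat.mul_le_mul_left _ h1
        _ = (2*q+1)^(m+1) := by ring

lemma extract_seg {β : Type*} (W A U C : List β) (p M : ℕ)
    (h : (W.drop p).take M = A ++ U ++ C) :
    (W.drop (p + A.length)).take U.length = U := by
  have h1 : W.drop (p + A.length) = U ++ (C ++ (W.drop p).drop M) := by
    have h2 := List.take_append_drop M (W.drop p)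
    rw [h] at h2
    calc W.drop (p + A.length) = (W.drop p).drop A.length := by
          rw [List.drop_drop, Nat.add_comm]
      _ = ((A ++ U ++ C) ++ (W.drop p).drop M).drop A.length := by rw [h2]
      _ = (A ++ (U ++ (C ++ (W.drop p).drop M))).drop A.length := by
          simp [List.append_assoc]
      _ = U ++ (C ++ (W.drop p).drop M) := List.drop_left
  rw [h1]
  exact List.take_left

lemma key_lemma (q : ℕ) (hq : 0 < q) : ∀ n, ∀ W : List (Fin q),
    tower (2 * q + 1) n ≤ W.length → Encounters (Zimin (n + 1)) W := by
  intro n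
  induction n with
  | zero =>
    intro W hW
    simp only [tower] at hW
    refine ⟨W.take 1, (List.take_prefix _ _).isInfix, fun _ => W.take 1, ?_, ?_⟩
    · intro x _ hc
      have hc' : W.take 1 = [] := hc
      have hl : (W.take 1).length = 1 := by simp [hW]
      rw [hc'] at hl; simp at hl
    · simp [Zimin]
  | succ m ih =>
    intro W hW
    set M := tower (2*q+1) m with hM
    have hMpos : 0 < M := tower_pos _ (by omega) m
    have htow : tower (2*q+1) (m+1) = (2*q+1)^M := rfl
    have hbig : M * (2 * q ^ M + 1) ≤ W.length :=
      le_trans (arith_key q M hq hMpos) (by rw [← htow]; exact hW)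
    set k := q ^ M with hk
    have hkpos : 0 < k := Nat.one_le_pow _ _ hq
    set f : ℕ → List (Fin q) := fun i => (W.drop (2*M*i)).take M with hf
    have hflen : ∀ i ≤ k, (f i).length = M := by
      intro i hi
      have hle : 2*M*i + M ≤ W.length := by
        calc 2*M*i + M ≤ 2*M*k + M := by
              have := Nat.mul_le_mul_left (2*M) hi; omega
          _ = M * (2*k+1) := by ring
          _ ≤ W.length := hbig
      simp only [hf, List.length_take, List.length_drop]
      omega
    set t : Finset (List (Fin q)) :=
      Finset.image (fun g : Fin M → Fin q => List.ofFn g) Finset.univ with ht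
    have hmaps : ∀ i ∈ Finset.range (k+1), f i ∈ t := by
      intro i hi
      simp only [Finset.mem_range] at hi
      have hlen := hflen i (by omega)
      refine Finset.mem_image.2 ⟨fun j => (f i).get (Fin.cast hlen.symm j),
        Finset.mem_univ _, ?_⟩
      apply List.ext_get
      · simp [hlen]
      · intro idx h1 h2
        simp [List.get_ofFn]
    have hcard : t.card < (Finset.range (k+1)).card := by
      have h1 : t.card ≤ Fintype.card (Fin M → Fin q) :=
        le_trans (Finset.card_image_le) (by simp)
      have h2 : Fintype.card (Fin M → Fin q) = k := by
        simp [hk]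
      simp only [Finset.card_range]
      omega
    obtain ⟨i, hi, j, hj, hij, hfij⟩ :=
      Finset.exists_ne_map_eq_of_card_lt_of_maps_to hcard hmaps
    simp only [Finset.mem_range] at hi hj
    obtain ⟨a, b, hab, ha, hb, hfab⟩ : ∃ a b, a < b ∧ a < k+1 ∧ b < k+1 ∧ f a = f b := by
      rcases (Ne.lt_or_gt hij) with h | h
      exacts [⟨i, j, h, hi, hj, hfij⟩, ⟨j, i, h, hj, hi, hfij.symm⟩]
    have hBienc : Encounters (Zimin (m+1)) (f a) := by
      apply ih
      rw [hflen a (by omega)]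
    obtain ⟨U, ⟨A, C, hACU⟩, φ, hφ, hUeq⟩ := hBienc
    set p₁ := 2*M*a with hp₁
    set p₂ := 2*M*b with hp₂
    have hpgap : p₁ + 2*M ≤ p₂ := by
      have h3 : 2*M*(a+1) ≤ 2*M*b := Nat.mul_le_mul_left _ (by omega)
      calc p₁ + 2*M = 2*M*(a+1) := by ring
        _ ≤ p₂ := h3
    have hp₂len : p₂ + M ≤ W.length := by
      calc p₂ + M ≤ 2*M*k + M := by
            have := Nat.mul_le_mul_left (2*M) (by omega : b ≤ k); omega
        _ = M * (2*k+1) := by ring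
        _ ≤ W.length := hbig
    have hB1 : (W.drop p₁).take M = A ++ U ++ C := hACU.symm
    have hB2 : (W.drop p₂).take M = A ++ U ++ C := by
      show f b = A ++ U ++ C
      rw [← hfab]; exact hACU.symm
    have hsum : A.length + U.length + C.length = M := by
      have hl := hflen a (by omega)
      rw [show f a = A ++ U ++ C from hACU.symm] at hl
      simp at hl
      omega
    set midlen := p₂ - p₁ - U.length with hmidlen
    set Mid := (W.drop (p₁ + A.length + U.length)).take midlen with hMid
    have hMidlen : Mid.length = midlen := by
      simp only [hMid, List.length_take, List.length_drop]
      omega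
    have hMidne : Mid ≠ [] := by
      intro hc
      have := hMidlen
      rw [hc] at this
      simp only [List.length_nil] at this
      omega
    have hU1 : (W.drop (p₁ + A.length)).take U.length = U := extract_seg W A U C p₁ M hB1
    have hU2 : (W.drop (p₂ + A.length)).take U.length = U := extract_seg W A U C p₂ M hB2
    have hseg : (W.drop (p₁ + A.length)).take (U.length + (midlen + U.length))
        = U ++ (Mid ++ U) := by
      calc (W.drop (p₁ + A.length)).take (U.length + (midlen + U.length))
          = (W.drop (p₁ + A.length)).take U.length
            ++ ((W.drop (p₁ + A.length)).drop U.length).take (midlen + U.length) :=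
            List.take_add ..
        _ = U ++ (W.drop (p₁ + A.length + U.length)).take (midlen + U.length) := by
            rw [hU1, List.drop_drop]
        _ = U ++ ((W.drop (p₁ + A.length + U.length)).take midlen
            ++ ((W.drop (p₁ + A.length + U.length)).drop midlen).take U.length) := by
            rw [List.take_add]
        _ = U ++ (Mid ++ U) := by
            rw [List.drop_drop, show p₁ + A.length + U.length + midlen = p₂ + A.length by omega,
              hU2]
    refine ⟨U ++ (Mid ++ U), ?_, ?_⟩
    · rw [← hseg]
      exact (List.take_prefix _ _).isInfix.trans (List.drop_suffix _ _).isInfix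
    · refine ⟨fun y => if y = m+1 then Mid else φ y, ?_, ?_⟩
      · intro x hx
        rw [show Zimin (m+1+1) = Zimin (m+1) ++ [m+1] ++ Zimin (m+1) from rfl] at hx
        simp only [List.mem_append, List.mem_singleton] at hx
        rcases hx with (hx | hx) | hx
        · have hlt := mem_zimin_lt _ x hx
          simpa [show x ≠ m+1 by omega] using hφ x hx
        · simpa [hx] using hMidne
        · have hlt := mem_zimin_lt _ x hx
          simpa [show x ≠ m+1 by omega] using hφ x hx
      · have hmapeq : (Zimin (m+1)).map (fun y => if y = m+1 then Mid else φ y)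
            = (Zimin (m+1)).map φ := by
          apply List.map_congr_left
          intro x hx
          have := mem_zimin_lt _ x hx
          simp [show x ≠ m+1 by omega]
        show U ++ (Mid ++ U) = ((Zimin (m+1+1)).map _).flatten
        rw [show Zimin (m+1+1) = Zimin (m+1) ++ [m+1] ++ Zimin (m+1) from rfl]
        simp only [List.map_append, List.flatten_append, hmapeq, List.map_cons,
          List.map_nil, if_pos rfl, List.flatten_cons, List.flatten_nil, List.append_nil]
        rw [← hUeq]
        simp [List.append_assoc]

theorem stmt0 (n q : ℕ) (hn : 0 < n) (hq : 0 < q) :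
    (∀ W : List (Fin q), tower (2 * q + 1) (n - 1) ≤ W.length → Encounters (Zimin n) W) ∧
    fZ n q ≤ tower (2 * q + 1) (n - 1) := by
  obtain ⟨m, rfl⟩ : ∃ m, n = m + 1 := ⟨n - 1, by omega⟩
  have hmain : ∀ W : List (Fin q), tower (2 * q + 1) (m + 1 - 1) ≤ W.length →
      Encounters (Zimin (m+1)) W := by
    simpa using key_lemma q hq m
  refine ⟨hmain, Nat.sInf_le ?_⟩
  intro W hWl
  exact hmain W (le_of_eq hWl.symm)
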